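/- Let m ≥ 1 be an integer, let a, b be real numbers with a > 0, b > 0 and 2mb > a, and set x_k = 1 + cos((2k−1)π/(2m)) + i·sin((2k−1)π/(2m)) for k = 1, …, 2m. Then F_D^{(2m)}(2mb−a; b, …, b; 2mb | x_1, …, x_{2m}) = (1/(2m)) · Γ(a/(2m))·Γ(2mb)·Γ((2mb−a)/(2m)) / (Γ(a)·Γ(b)·Γ(2mb−a)). -/

import Mathlib

open MeasureTheory

noncomputable def lauricellaFD (n : ℕ) (a : ℂ) (b : Fin n → ℂ) (c : ℂ) (x : Fin n → ℂ) : ℂ :=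
  (Complex.Gamma c / (Complex.Gamma a * Complex.Gamma (c - a))) *
    ∫ u in (0:ℝ)..1, (u : ℂ) ^ (a - 1) * ((1 : ℂ) - u) ^ (c - a - 1) *
      ∏ k, ((1 : ℂ) - x k * u) ^ (-(b k))

noncomputable def appellF1 (a b₁ b₂ c x₁ x₂ : ℂ) : ℂ :=
  lauricellaFD 2 a ![b₁, b₂] c ![x₁, x₂]

noncomputable def ellipticK (k : ℝ) : ℝ :=
  ∫ θ in (0:ℝ)..(Real.pi/2), (1 - k ^ 2 * Real.sin θ ^ 2) ^ (-(1:ℝ)/2)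

namespace LauricellaAux

open Set in
lemma rpow_grind (k : ℕ) (A B C α β : ℝ) (hA : 0 < A) (hB : 0 < B) (hC : 0 < C) :
    ((k+1:ℕ) * A^k * B^k / C^2) * ((A^(k+1:ℕ)/C) ^ (α-1) * (B^(k+1:ℕ)/C) ^ (β-1)) =
    ((k+1:ℕ):ℝ) * (A^(((k:ℝ)+1)*α - 1) * B^(((k:ℝ)+1)*β - 1) * C^(-(α+β))) := by
  have h1 : (A^(k+1:ℕ)/C) ^ (α-1) = A ^ (((k:ℝ)+1)*(α-1)) / C ^ (α-1) := by
    rw [Real.div_rpow (by positivity) hC.le]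
    congr 1
    rw [← Real.rpow_natCast A (k+1), ← Real.rpow_mul hA.le]
    push_cast
    ring_nf
  have h2 : (B^(k+1:ℕ)/C) ^ (β-1) = B ^ (((k:ℝ)+1)*(β-1)) / C ^ (β-1) := by
    rw [Real.div_rpow (by positivity) hC.le]
    congr 1
    rw [← Real.rpow_natCast B (k+1), ← Real.rpow_mul hB.le]
    push_cast
    ring_nf
  rw [h1, h2]
  have hA' : A^k = A^((k:ℝ)) := (Real.rpow_natCast A k).symm
  have hB' : B^k = B^((k:ℝ)) := (Real.rpow_natCast B k).symm
  have hC2 : C^2 = C^((2:ℝ)) := by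
    rw [show ((2:ℝ)) = ((2:ℕ):ℝ) by norm_num, Real.rpow_natCast]
  rw [hA', hB', hC2]
  have eA : A^(((k:ℝ)+1)*α - 1) = A^((k:ℝ)) * A^(((k:ℝ)+1)*(α-1)) := by
    rw [← Real.rpow_add hA]; ring_nf
  have eB : B^(((k:ℝ)+1)*β - 1) = B^((k:ℝ)) * B^(((k:ℝ)+1)*(β-1)) := by
    rw [← Real.rpow_add hB]; ring_nf
  have eC : C^(-(α+β)) = (C^((2:ℝ)) * (C^(α-1) * C^(β-1)))⁻¹ := by
    rw [← Real.rpow_add hC, ← Real.rpow_add hC, ← Real.rpow_neg hC.le]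
    ring_nf
  rw [eA, eB, eC]
  have n1 : C^((2:ℝ)) ≠ 0 := by positivity
  have n2 : C^(α-1) ≠ 0 := by positivity
  have n3 : C^(β-1) ≠ 0 := by positivity
  field_simp

open Set in
lemma subst_int (n : ℕ) (hn : 0 < n) (α β : ℝ) :
    ∫ v in (0:ℝ)..1, v^(α-1)*(1-v)^(β-1)
      = (n:ℝ) * ∫ u in (0:ℝ)..1, u^((n:ℝ)*α-1)*(1-u)^((n:ℝ)*β-1)*(u^n + (1-u)^n)^(-(α+β)) := by
  obtain ⟨k, hk⟩ : ∃ k, n = k+1 := ⟨n-1, by omega⟩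
  subst hk
  set n := k + 1 with hn'
  set Q : ℝ → ℝ := fun u => u^n + (1-u)^n with hQdef
  set f : ℝ → ℝ := fun u => u^n / Q u with hfdef
  have hQ : ∀ u ∈ Icc (0:ℝ) 1, 0 < Q u := by
    intro u hu
    rcases lt_or_eq_of_le hu.1 with h | h
    · exact add_pos_of_pos_of_nonneg (pow_pos h n) (pow_nonneg (by linarith [hu.2]) n)
    · simp [hQdef, ← h, zero_pow (by omega : n ≠ 0)]
  have hD : ∀ u : ℝ, HasDerivAt Q ((n:ℝ)*u^(n-1) - (n:ℝ)*(1-u)^(n-1)) u := by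
    intro u
    have h1 : HasDerivAt (fun u : ℝ => u ^ n) ((n:ℝ)*u^(n-1)) u := by
      simpa using hasDerivAt_pow n u
    have h2 : HasDerivAt (fun u : ℝ => (1-u) ^ n) (-((n:ℝ)*(1-u)^(n-1))) u := by
      have hi : HasDerivAt (fun u : ℝ => 1 - u) (-1) u := (hasDerivAt_id u).const_sub 1
      have := (hasDerivAt_pow n (1-u)).comp u hi
      simpa [mul_comm, Function.comp_def] using this
    exact (h1.add h2).congr_deriv (by ring)
  have hf' : ∀ u : ℝ, 0 < Q u → HasDerivAt f ((n:ℝ) * u^k * (1-u)^k / (Q u)^2) u := by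
    intro u hQu
    have h1 : HasDerivAt (fun u : ℝ => u ^ n) ((n:ℝ)*u^(n-1)) u := by
      simpa using hasDerivAt_pow n u
    have h := h1.div (hD u) hQu.ne'
    refine h.congr_deriv ?_
    have : n - 1 = k := by omega
    rw [this]
    field_simp [hQdef]
    push_cast
    ring
  have hcont : ContinuousOn f (Icc 0 1) := by
    apply ContinuousOn.div
    · fun_prop
    · fun_prop
    · intro u hu; exact (hQ u hu).ne'
  have hmono : StrictMonoOn f (Icc 0 1) := by
    apply strictMonoOn_of_deriv_pos (convex_Icc 0 1) hcont
    intro u hu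
    rw [interior_Icc] at hu
    have hQu := hQ u (Ioo_subset_Icc_self hu)
    rw [(hf' u hQu).deriv]
    have h1 : (0:ℝ) < u := hu.1
    have h2 : (0:ℝ) < 1 - u := by linarith [hu.2]
    positivity
  have himg : f '' Ioo 0 1 = Ioo 0 1 := by
    have hf0 : f 0 = 0 := by simp [hfdef, hQdef, zero_pow (by omega : n ≠ 0)]
    have hf1 : f 1 = 1 := by norm_num [hfdef, hQdef, zero_pow (by omega : n ≠ 0)]
    apply Subset.antisymm
    · rintro v ⟨u, hu, rfl⟩
      have hQu := hQ u (Ioo_subset_Icc_self hu)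
      have h1 : (0:ℝ) < u := hu.1
      have h2 : (0:ℝ) < 1 - u := by linarith [hu.2]
      constructor
      · exact div_pos (pow_pos h1 n) hQu
      · rw [div_lt_one hQu]
        have : 0 < (1-u)^n := pow_pos h2 n
        simp only [hQdef]
        linarith
    · have := intermediate_value_Ioo (by norm_num : (0:ℝ) ≤ 1) hcont
      rw [hf0, hf1] at this
      exact this
  have hinj : InjOn f (Ioo 0 1) := (hmono.injOn).mono Ioo_subset_Icc_self
  have key := integral_image_eq_integral_abs_deriv_smul measurableSet_Ioo
    (fun u hu => ((hf' u (hQ u (Ioo_subset_Icc_self hu))).hasDerivWithinAt))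
    hinj (fun v => v^(α-1)*(1-v)^(β-1))
  rw [himg] at key
  rw [intervalIntegral.integral_of_le (by norm_num : (0:ℝ) ≤ 1),
    integral_Ioc_eq_integral_Ioo, key,
    intervalIntegral.integral_of_le (by norm_num : (0:ℝ) ≤ 1),
    integral_Ioc_eq_integral_Ioo, ← integral_const_mul]
  apply setIntegral_congr_fun measurableSet_Ioo
  intro u hu
  have h1 : (0:ℝ) < u := hu.1
  have h2 : (0:ℝ) < 1 - u := by linarith [hu.2]
  have hQu := hQ u (Ioo_subset_Icc_self hu)
  have hfu : f u = u^n / Q u := rfl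
  have hfu2 : 1 - f u = (1-u)^n / Q u := by
    rw [hfu, eq_div_iff hQu.ne', sub_mul, one_mul, div_mul_cancel₀ _ hQu.ne']
    simp only [hQdef]
    ring
  beta_reduce
  rw [smul_eq_mul, hfu2, hfu]
  rw [abs_of_pos (by positivity : (0:ℝ) < (n:ℝ) * u^k * (1-u)^k / (Q u)^2)]
  have := rpow_grind k u (1-u) (Q u) α β h1 h2 hQu
  simp only [hQdef] at this ⊢
  rw [show ((n:ℝ)) = ((k+1:ℕ):ℝ) by push_cast [hn']; ring] at *
  push_cast at this ⊢
  exact this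


open Complex Finset

lemma prod_lin (n : ℕ) (hn : 0 < n) (u v : ℂ) :
    ∏ k ∈ range n, (v - u * Complex.exp (((2 * (k:ℝ) + 1) * Real.pi / n : ℝ) * Complex.I)) =
      v ^ n + u ^ n := by
  have hn' : (n:ℂ) ≠ 0 := Nat.cast_ne_zero.mpr hn.ne'
  set η : ℂ := Complex.exp ((Real.pi / n : ℝ) * Complex.I) with hη
  set ζ : ℂ := Complex.exp (2 * Real.pi * Complex.I / n) with hζ
  have hζprim : IsPrimitiveRoot ζ n := Complex.isPrimitiveRoot_exp n hn.ne'
  have hηn : η ^ n = -1 := by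
    rw [hη, ← Complex.exp_nat_mul]
    rw [show (n : ℂ) * (((Real.pi / n : ℝ)) * Complex.I) = (Real.pi : ℂ) * Complex.I by
      push_cast; field_simp]
    exact Complex.exp_pi_mul_I
  have he : ∀ k : ℕ, ζ ^ k * η = Complex.exp (((2 * (k:ℝ) + 1) * Real.pi / n : ℝ) * Complex.I) := by
    intro k
    rw [hζ, hη, ← Complex.exp_nat_mul, ← Complex.exp_add]
    congr 1
    push_cast
    field_simp
  have key : ∀ w : ℂ,
      ∏ k ∈ range n, (w - Complex.exp (((2 * (k:ℝ) + 1) * Real.pi / n : ℝ) * Complex.I))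
        = w ^ n + 1 := by
    intro w
    have h := congrArg (Polynomial.eval w) (X_pow_sub_C_eq_prod hζprim hn hηn)
    simp only [Polynomial.eval_sub, Polynomial.eval_pow, Polynomial.eval_X, Polynomial.eval_C,
      Polynomial.eval_prod, sub_neg_eq_add, he] at h
    exact h.symm
  rcases eq_or_ne u 0 with hu | hu
  · simp [hu, zero_pow hn.ne', key v]
  · have h1 : ∏ k ∈ range n, (v - u * Complex.exp (((2 * (k:ℝ) + 1) * Real.pi / n : ℝ) * Complex.I))
        = ∏ k ∈ range n, (u * (v / u - Complex.exp (((2 * (k:ℝ) + 1) * Real.pi / n : ℝ) * Complex.I))) := by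
      apply Finset.prod_congr rfl
      intro k _
      field_simp
    rw [h1, Finset.prod_mul_distrib, Finset.prod_const, Finset.card_range, key (v / u),
      mul_add, mul_one, ← mul_pow]
    rw [mul_div_cancel₀ _ hu]

lemma prod_pair (m : ℕ) (f : ℕ → ℂ) :
    ∏ k ∈ range (2*m), f k = ∏ k ∈ range m, (f k * f (2*m-1-k)) := by
  rw [two_mul, Finset.prod_range_add, ← Finset.prod_range_reflect (fun i => f (m + i)) m,
    ← Finset.prod_mul_distrib]
  apply prod_congr rfl
  intro k hk
  simp only [Finset.mem_range] at hk
  congr 2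
  omega

lemma sin_ne (m : ℕ) (hm : 1 ≤ m) (k : ℕ) (hk : k < 2*m) :
    Real.sin ((2 * (k:ℝ) + 1) * Real.pi / (2*m)) ≠ 0 := by
  intro h
  rw [Real.sin_eq_zero_iff] at h
  obtain ⟨j, hj⟩ := h
  have hπ : Real.pi ≠ 0 := Real.pi_ne_zero
  have hm' : (2*(m:ℝ)) ≠ 0 := by positivity
  have h2 : ((j : ℝ) * (2*m)) * Real.pi = (2*k+1) * Real.pi := by
    field_simp at hj
    rw [← hj]; ring
  have h3 : (j : ℝ) * (2*m) = 2*k+1 := mul_right_cancel₀ hπ h2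
  have h4 : ((j * (2*m) : ℤ) : ℝ) = ((2*k+1 : ℤ) : ℝ) := by push_cast; linarith
  have h5 : (j * (2*m) : ℤ) = 2*k+1 := Int.cast_injective h4
  have h6 : (2 * (j*m) : ℤ) = 2*k+1 := by linarith [h5]
  omega

noncomputable def θf (m : ℕ) (k : ℕ) : ℝ := (2 * (k:ℝ) + 1) * Real.pi / (2*m)

noncomputable def zf (m : ℕ) (u : ℝ) (k : ℕ) : ℂ :=
  (1:ℂ) - (1 + (Real.cos (θf m k):ℝ) + Complex.I * (Real.sin (θf m k):ℝ)) * u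

section
variable (m : ℕ) (u : ℝ)

lemma zf_eq (k : ℕ) : zf m u k = ((1 - u : ℝ):ℂ) - (u:ℂ) * Complex.exp ((θf m k : ℝ) * Complex.I) := by
  rw [Complex.exp_mul_I, zf, ← Complex.ofReal_cos, ← Complex.ofReal_sin]
  push_cast
  ring

lemma theta_reflect (hm : 1 ≤ m) (k : ℕ) (hk : k < 2*m) :
    θf m (2*m-1-k) = 2 * Real.pi - θf m k := by
  unfold θf
  have h1 : ((2*m-1-k : ℕ) : ℝ) = 2*(m:ℝ) - 1 - k := by
    push_cast [Nat.cast_sub (by omega : k ≤ 2*m-1), Nat.cast_sub (by omega : 1 ≤ 2*m)]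
    ring
  rw [h1]
  have hm' : (2*(m:ℝ)) ≠ 0 := by positivity
  field_simp
  ring

lemma zf_conj (hm : 1 ≤ m) (k : ℕ) (hk : k < 2*m) :
    zf m u (2*m-1-k) = (starRingEnd ℂ) (zf m u k) := by
  rw [zf, zf, theta_reflect m hm k hk]
  simp only [Real.cos_sub, Real.sin_sub, Real.cos_two_pi, Real.sin_two_pi]
  simp only [map_sub, map_mul, map_add, map_one, Complex.conj_ofReal, Complex.conj_I]
  push_cast
  ring

lemma zf_im (k : ℕ) : (zf m u k).im = -(Real.sin (θf m k) * u) := by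
  simp [zf, Complex.sin_ofReal_re]

lemma zf_prod (hm : 1 ≤ m) : ∏ k ∈ range (2*m), zf m u k = ((1-u:ℝ):ℂ)^(2*m) + ((u:ℝ):ℂ)^(2*m) := by
  have := prod_lin (2*m) (by omega) (u : ℂ) ((1-u:ℝ):ℂ)
  rw [← this]
  apply prod_congr rfl
  intro k _
  rw [zf_eq]
  norm_num [θf]

lemma normSq_prod (hm : 1 ≤ m) :
    ∏ k ∈ range m, Complex.normSq (zf m u k) = (1-u)^(2*m) + u^(2*m) := by
  apply Complex.ofReal_injective
  push_cast [← Complex.mul_conj]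
  rw [show ∏ k ∈ range m, (zf m u k * (starRingEnd ℂ) (zf m u k)) =
      ∏ k ∈ range m, (zf m u k * zf m u (2*m-1-k)) from prod_congr rfl fun k hk => by
    rw [zf_conj m u hm k (by simp at hk; omega)]]
  rw [← prod_pair m (zf m u), zf_prod m u hm]
  push_cast
  ring

lemma zf_cpow_prod (hm : 1 ≤ m) (b : ℝ) (hu : 0 < u) :
    ∏ k ∈ range (2*m), (zf m u k) ^ (-(b:ℂ)) =
      ((((1-u)^(2*m) + u^(2*m)) ^ (-b) : ℝ) : ℂ) := by
  have him : ∀ k, k < 2*m → (zf m u k).im ≠ 0 := by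
    intro k hk
    rw [zf_im]
    exact neg_ne_zero.mpr (mul_ne_zero (sin_ne m hm k hk) hu.ne')
  rw [prod_pair]
  rw [show ∏ k ∈ range m, ((zf m u k) ^ (-(b:ℂ)) * (zf m u (2*m-1-k)) ^ (-(b:ℂ))) =
      ∏ k ∈ range m, ((Complex.normSq (zf m u k) ^ (-b) : ℝ) : ℂ) from
    prod_congr rfl fun k hk => ?_]
  · rw [← Complex.ofReal_prod, Real.finset_prod_rpow _ _ (fun i _ => Complex.normSq_nonneg _),
      normSq_prod m u hm]
  · simp only [Finset.mem_range] at hk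
    have hk2 : k < 2*m := by omega
    have harg : (zf m u k).arg ≠ Real.pi := by
      intro h
      exact him k hk2 ((Complex.arg_eq_pi_iff.mp h).2)
    rw [zf_conj m u hm k hk2, Complex.conj_cpow _ _ harg]
    rw [show (starRingEnd ℂ) (-(b:ℂ)) = -(b:ℂ) by simp [Complex.conj_ofReal]]
    rw [Complex.mul_conj]
    congr 1
    rw [Complex.normSq_eq_norm_sq, Complex.normSq_eq_norm_sq]
    rw [show (-(b:ℂ)) = ((-b : ℝ) : ℂ) by push_cast; ring, Complex.norm_cpow_real]
    rw [← Real.rpow_natCast (‖zf m u k‖ ^ (-b)) 2,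
      ← Real.rpow_natCast (‖zf m u k‖) 2,
      ← Real.rpow_mul (norm_nonneg _), ← Real.rpow_mul (norm_nonneg _)]
    ring_nf

end

end LauricellaAux

theorem lauricella_even_value (m : ℕ) (hm : 1 ≤ m) (a b : ℝ) (ha : 0 < a) (hb : 0 < b)
    (hab : a < 2 * m * b) :
    lauricellaFD (2 * m) (2 * m * (b : ℂ) - a) (fun _ => (b : ℂ)) (2 * m * (b : ℂ))
      (fun k =>
        1 + Real.cos ((2 * (k.1 : ℝ) + 1) * Real.pi / (2 * m)) +
          Complex.I * Real.sin ((2 * (k.1 : ℝ) + 1) * Real.pi / (2 * m))) =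
    (1 / (2 * m)) *
      (Complex.Gamma ((a : ℂ) / (2 * m)) * Complex.Gamma (2 * m * (b : ℂ)) *
        Complex.Gamma ((2 * m * (b : ℂ) - a) / (2 * m))) /
      (Complex.Gamma (a : ℂ) * Complex.Gamma (b : ℂ) * Complex.Gamma (2 * m * (b : ℂ) - a)) := by
  classical
  open LauricellaAux in
  set p : ℝ := 2 * m * b - a with hp
  have hpp : 0 < p := by simp only [hp]; linarith
  have hm0 : (0:ℝ) < 2 * m := by positivity
  set α : ℝ := p / (2 * m) with hα
  set β : ℝ := a / (2 * m) with hβ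
  have hαpos : 0 < α := div_pos hpp hm0
  have hβpos : 0 < β := div_pos ha hm0
  have hαβ : α + β = b := by
    rw [hα, hβ, ← add_div, hp]
    field_simp
    ring
  -- the real integrand
  set g : ℝ → ℝ := fun u => u^(p-1) * (1-u)^(a-1) * (u^(2*m) + (1-u)^(2*m))^(-b) with hg
  -- Step A : the complex integral equals the real one
  have stepA :
      (∫ u in (0:ℝ)..1, (u : ℂ) ^ (2 * m * (b:ℂ) - a - 1) *
          ((1 : ℂ) - u) ^ (2 * m * (b:ℂ) - (2 * m * (b:ℂ) - a) - 1) *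
          ∏ k : Fin (2*m), ((1 : ℂ) - (1 + (Real.cos ((2 * (k.1 : ℝ) + 1) * Real.pi / (2 * m)) : ℝ) +
            Complex.I * (Real.sin ((2 * (k.1 : ℝ) + 1) * Real.pi / (2 * m)) : ℝ)) * u) ^ (-(b:ℂ)))
        = ((∫ u in (0:ℝ)..1, g u : ℝ) : ℂ) := by
    rw [← intervalIntegral.integral_ofReal]
    apply intervalIntegral.integral_congr
    intro u hu
    dsimp only
    rw [Set.uIcc_of_le (by norm_num : (0:ℝ) ≤ 1)] at hu
    have hu0 : (0:ℝ) ≤ u := hu.1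
    have hu1 : u ≤ 1 := hu.2
    have e1 : (u : ℂ) ^ (2 * m * (b:ℂ) - a - 1) = ((u ^ (p-1) : ℝ) : ℂ) := by
      rw [Complex.ofReal_cpow hu0]
      congr 1
      push_cast [hp]
      ring
    have e2 : ((1 : ℂ) - u) ^ (2 * m * (b:ℂ) - (2 * m * (b:ℂ) - a) - 1)
        = (((1-u) ^ (a-1) : ℝ) : ℂ) := by
      rw [Complex.ofReal_cpow (by linarith : (0:ℝ) ≤ 1 - u)]
      push_cast
      congr 1
      ring
    have e3 : (∏ k : Fin (2*m), ((1 : ℂ) - (1 + (Real.cos ((2 * (k.1 : ℝ) + 1) * Real.pi / (2 * m)) : ℝ) +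
            Complex.I * (Real.sin ((2 * (k.1 : ℝ) + 1) * Real.pi / (2 * m)) : ℝ)) * u) ^ (-(b:ℂ)))
        = (((u^(2*m) + (1-u)^(2*m))^(-b) : ℝ) : ℂ) := by
      have hfin : (∏ k : Fin (2*m), ((1 : ℂ) - (1 + (Real.cos ((2 * (k.1 : ℝ) + 1) * Real.pi / (2 * m)) : ℝ) +
            Complex.I * (Real.sin ((2 * (k.1 : ℝ) + 1) * Real.pi / (2 * m)) : ℝ)) * u) ^ (-(b:ℂ)))
          = ∏ k ∈ Finset.range (2*m), (zf m u k) ^ (-(b:ℂ)) := by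
        rw [← Fin.prod_univ_eq_prod_range (fun k => (zf m u k) ^ (-(b:ℂ))) (2*m)]
        apply Finset.prod_congr rfl
        intro k _
        rfl
      rw [hfin]
      rcases eq_or_lt_of_le hu0 with h0 | h0
      · simp [zf, ← h0, Complex.one_cpow, zero_pow (by omega : 2*m ≠ 0)]
      · rw [zf_cpow_prod m u hm b h0]
        norm_num [add_comm]
    rw [e1, e2, e3, hg]
    push_cast
    ring
  -- Step B : substitution
  have stepB : ((2*m : ℕ):ℝ) * (∫ u in (0:ℝ)..1, g u)
      = ∫ v in (0:ℝ)..1, v^(α-1) * (1-v)^(β-1) := by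
    rw [subst_int (2*m) (by omega) α β]
    congr 1
    apply intervalIntegral.integral_congr
    intro u _
    dsimp only
    have c1 : ((2*m : ℕ):ℝ) * α = p := by
      push_cast [hα]
      field_simp
    have c2 : ((2*m : ℕ):ℝ) * β = a := by
      push_cast [hβ]
      field_simp
    have c1' : ((2*m : ℕ):ℝ) * α - 1 = p - 1 := by rw [c1]
    have c2' : ((2*m : ℕ):ℝ) * β - 1 = a - 1 := by rw [c2]
    simp only [hg]
    push_cast at c1' c2' ⊢
    rw [c1', c2', hαβ]
  -- Step C : beta integral
  have hcastα : ((α : ℝ) : ℂ) = (2 * m * (b : ℂ) - a) / (2 * m) := by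
    rw [hα, hp]
    push_cast
    ring
  have hcastβ : ((β : ℝ) : ℂ) = (a : ℂ) / (2 * m) := by
    rw [hβ]
    push_cast
    ring
  have stepC : ((∫ v in (0:ℝ)..1, v^(α-1) * (1-v)^(β-1) : ℝ) : ℂ)
      = Complex.betaIntegral ((α : ℝ) : ℂ) ((β : ℝ) : ℂ) := by
    rw [Complex.betaIntegral, ← intervalIntegral.integral_ofReal]
    apply intervalIntegral.integral_congr
    intro v hv
    dsimp only
    rw [Set.uIcc_of_le (by norm_num : (0:ℝ) ≤ 1)] at hv
    have e1 : ((v ^ (α-1) : ℝ) : ℂ) = (v:ℂ) ^ (((α : ℝ) : ℂ) - 1) := by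
      rw [Complex.ofReal_cpow hv.1]
      congr 1
      push_cast
      ring
    have e2 : (((1-v) ^ (β-1) : ℝ) : ℂ) = ((1:ℂ) - v) ^ (((β : ℝ) : ℂ) - 1) := by
      rw [Complex.ofReal_cpow (by linarith [hv.2] : (0:ℝ) ≤ 1 - v)]
      push_cast
      all_goals ring_nf
    push_cast [← e1, ← e2]
    ring
  have hbeta : Complex.betaIntegral ((α : ℝ) : ℂ) ((β : ℝ) : ℂ)
      = Complex.Gamma ((α : ℝ) : ℂ) * Complex.Gamma ((β : ℝ) : ℂ) / Complex.Gamma (b : ℂ) := by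
    have h := Complex.Gamma_mul_Gamma_eq_betaIntegral
      (by simpa using hαpos : 0 < Complex.re ((α : ℝ) : ℂ))
      (by simpa using hβpos : 0 < Complex.re ((β : ℝ) : ℂ))
    have hsum : ((α : ℝ) : ℂ) + ((β : ℝ) : ℂ) = (b : ℂ) := by
      rw [← Complex.ofReal_add, hαβ]
    rw [hsum] at h
    have hΓb : Complex.Gamma (b : ℂ) ≠ 0 := by
      rw [Complex.Gamma_ofReal]
      exact_mod_cast (Real.Gamma_pos_of_pos hb).ne'
    rw [h, mul_comm, mul_div_assoc, div_self hΓb, mul_one]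
  -- assemble
  have h2m : ((2*m:ℕ):ℂ) ≠ 0 := by
    exact_mod_cast Nat.cast_ne_zero.mpr (by omega : 2*m ≠ 0)
  have hIr : ((2*m:ℕ):ℂ) * ((∫ u in (0:ℝ)..1, g u : ℝ) : ℂ)
      = Complex.Gamma ((α : ℝ) : ℂ) * Complex.Gamma ((β : ℝ) : ℂ) / Complex.Gamma (b : ℂ) := by
    calc ((2*m:ℕ):ℂ) * ((∫ u in (0:ℝ)..1, g u : ℝ) : ℂ)
        = ((((2*m:ℕ):ℝ) * ∫ u in (0:ℝ)..1, g u : ℝ) : ℂ) := by push_cast; ring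
      _ = ((∫ v in (0:ℝ)..1, v^(α-1) * (1-v)^(β-1) : ℝ) : ℂ) := by rw [stepB]
      _ = Complex.betaIntegral ((α : ℝ) : ℂ) ((β : ℝ) : ℂ) := stepC
      _ = _ := hbeta
  have hIval : ((∫ u in (0:ℝ)..1, g u : ℝ) : ℂ)
      = Complex.Gamma ((α : ℝ) : ℂ) * Complex.Gamma ((β : ℝ) : ℂ) / Complex.Gamma (b : ℂ)
        / ((2*m:ℕ):ℂ) := by
    rw [eq_div_iff h2m, mul_comm]
    exact hIr
  rw [lauricellaFD, stepA, hIval, ← hcastα, ← hcastβ]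
  push_cast
  ring
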